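/- Suppose p = √2−1. For any event determined by the walk exiting the interval (L,U): taking U = x > 0 fixed and letting L → −∞, the limiting upper-exit probability from 0 equals 1, i.e. β(0)|_{L=−∞}^{U=x} = 1; and taking L = −x fixed and letting U → +∞, the limiting upper-exit probability from 0 equals 0, i.e. β(0)|_{L=−x}^{U=+∞} = 0. Equivalently, lim_{L→−∞} β(0) = 1 for fixed U = x, and lim_{U→+∞} β(0) = 0 for fixed L = −x, where β(0) is computed with the given barriers L, U. -/

import Mathlib

open MeasureTheory ProbabilityTheory Filter
open scoped ENNReal Classical

noncomputable section

variable {Ω : Type*} [MeasurableSpace Ω]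

/-- The `k`-th step of the ladder chain `L(2,2,p)` built from the driving
sequence `ξ` (indexed from 1): `X₁ = ±1` according to `ξ₁`, and for `k ≥ 2`,
`X_k = -1` if `ξ_k = -1`, `X_k = 2` if `ξ_k = ξ_{k-1} = 1`, and `X_k = 1`
if `ξ_k = 1, ξ_{k-1} = -1`. -/
def ladderX (ξ : ℕ → Ω → ℤ) (k : ℕ) (ω : Ω) : ℤ :=
  if k = 1 then (if ξ 1 ω = 1 then 1 else -1)
  else if ξ k ω = -1 then -1
  else if ξ (k - 1) ω = 1 then 2 else 1

/-- The ladder chain `S_n = X₁ + ⋯ + X_n` (with `S_0 = 0`). -/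
def ladderS (ξ : ℕ → Ω → ℤ) (n : ℕ) (ω : Ω) : ℤ :=
  ∑ k ∈ Finset.Icc 1 n, ladderX ξ k ω

/-- The truncated exit time `τ_k^x`: the least `l ≤ k` with `S_l^x ≤ L` or
`S_l^x ≥ U`, and `k` if there is no such `l`. -/
def ladderTau (ξ : ℕ → Ω → ℤ) (L U x : ℤ) (k : ℕ) (ω : Ω) : ℕ :=
  if ∃ l ≤ k, (x + ladderS ξ l ω ≤ L ∨ U ≤ x + ladderS ξ l ω)
  then sInf {l | l ≤ k ∧ (x + ladderS ξ l ω ≤ L ∨ U ≤ x + ladderS ξ l ω)}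
  else k

/-- The event `A_k^x`: the walk started at `x` exits through the lower
barrier `L` within the first `k` steps. -/
def ladderA (ξ : ℕ → Ω → ℤ) (L U x : ℤ) (k : ℕ) : Set Ω :=
  ⋃ l ∈ Finset.range (k + 1),
    {ω | ladderTau ξ L U x k ω = l ∧ x + ladderS ξ l ω ≤ L}

/-- The event `B_k^x`: the walk started at `x` exits through the upper
barrier `U` within the first `k` steps. -/
def ladderB (ξ : ℕ → Ω → ℤ) (L U x : ℤ) (k : ℕ) : Set Ω :=
  ⋃ l ∈ Finset.range (k + 1),
    {ω | ladderTau ξ L U x k ω = l ∧ U ≤ x + ladderS ξ l ω}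

set_option linter.unusedSectionVars false
set_option linter.unusedVariables false
namespace LadderAux

/-- σ-algebra generated by ξ_1,…,ξ_n. -/
def mdl (ξ : ℕ → Ω → ℤ) (n : ℕ) : MeasurableSpace Ω :=
  MeasurableSpace.comap (fun ω (i : (Finset.Icc 1 n : Finset ℕ)) => ξ i ω) MeasurableSpace.pi

lemma mdl_le (ξ : ℕ → Ω → ℤ) (hmeas : ∀ n, Measurable (ξ n)) (n : ℕ) :
    mdl ξ n ≤ ‹MeasurableSpace Ω› := by
  exact measurable_iff_comap_le.mp (measurable_pi_lambda _ fun i => hmeas i)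

lemma measurable_xi_mdl (ξ : ℕ → Ω → ℤ) {n i : ℕ} (h1 : 1 ≤ i) (h2 : i ≤ n) :
    Measurable[mdl ξ n] (ξ i) := by
  have hi : i ∈ Finset.Icc 1 n := Finset.mem_Icc.2 ⟨h1, h2⟩
  have : ξ i = (fun g : ((Finset.Icc 1 n : Finset ℕ)) → ℤ => g ⟨i, hi⟩) ∘
      (fun ω (j : (Finset.Icc 1 n : Finset ℕ)) => ξ j ω) := rfl
  rw [this]
  exact (measurable_pi_apply _).comp (Measurable.of_comap_le le_rfl)

lemma measurableSet_xi_eq (ξ : ℕ → Ω → ℤ) {n i : ℕ} (h1 : 1 ≤ i) (h2 : i ≤ n) (v : ℤ) :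
    MeasurableSet[mdl ξ n] {ω | ξ i ω = v} :=
  measurable_xi_mdl ξ h1 h2 (MeasurableSet.singleton v)

lemma measurable_ladderX_mdl (ξ : ℕ → Ω → ℤ) {n k : ℕ} (h1 : 1 ≤ k) (h2 : k ≤ n) :
    Measurable[mdl ξ n] (ladderX ξ k) := by
  rcases eq_or_ne k 1 with rfl | hk
  · have h : ladderX ξ 1 = fun ω => if ξ 1 ω = 1 then (1 : ℤ) else -1 := by
      funext ω; simp [ladderX]
    rw [h]
    exact Measurable.ite (measurableSet_xi_eq ξ le_rfl h2 1) measurable_const measurable_const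
  · have h : ladderX ξ k = fun ω =>
        if ξ k ω = -1 then (-1 : ℤ) else if ξ (k-1) ω = 1 then 2 else 1 := by
      funext ω; simp [ladderX, hk]
    rw [h]
    refine Measurable.ite (measurableSet_xi_eq ξ h1 h2 (-1)) measurable_const ?_
    exact Measurable.ite (measurableSet_xi_eq ξ (by omega) (by omega) 1)
      measurable_const measurable_const

lemma measurable_ladderS_mdl (ξ : ℕ → Ω → ℤ) {n j : ℕ} (h : j ≤ n) :
    Measurable[mdl ξ n] (ladderS ξ j) := by
  unfold ladderS
  exact Finset.measurable_sum _ fun k hk => by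
    have := Finset.mem_Icc.1 hk
    exact measurable_ladderX_mdl ξ this.1 (le_trans this.2 h)

/-- Key independence lemma. -/
lemma indep_key (ξ : ℕ → Ω → ℤ) (P : Measure Ω) [IsProbabilityMeasure P]
    (hmeas : ∀ n, Measurable (ξ n))
    (hindep : iIndepFun ξ P)
    {n j : ℕ} (hj : n < j) {A : Set Ω} (hA : MeasurableSet[mdl ξ n] A) (v : ℤ) :
    P (A ∩ {ω | ξ j ω = v}) = P A * P {ω | ξ j ω = v} := by
  obtain ⟨s, hs, rfl⟩ := hA
  have hdisj : Disjoint (Finset.Icc 1 n) ({j} : Finset ℕ) := by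
    simp only [Finset.disjoint_singleton_right, Finset.mem_Icc]; omega
  have h := hindep.indepFun_finset (Finset.Icc 1 n) {j} hdisj hmeas
  have hj' : j ∈ ({j} : Finset ℕ) := Finset.mem_singleton_self j
  have hEq : {ω | ξ j ω = v} =
      (fun a (i : (({j} : Finset ℕ) : Finset ℕ)) => ξ i a) ⁻¹'
        ((fun g : ((({j} : Finset ℕ) : Finset ℕ)) → ℤ => g ⟨j, hj'⟩) ⁻¹' {v}) := rfl
  rw [hEq]
  exact h.measure_inter_preimage_eq_mul s _ hs
    (measurable_pi_apply (⟨j, hj'⟩ : (({j} : Finset ℕ) : Finset ℕ)) (MeasurableSet.singleton v))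


/-- no exit strictly before time `l` -/
def goodSet (ξ : ℕ → Ω → ℤ) (L U : ℤ) (l : ℕ) : Set Ω :=
  {ω | ∀ j < l, ¬(ladderS ξ j ω ≤ L ∨ U ≤ ladderS ξ j ω)}

lemma ladderS_zero (ξ : ℕ → Ω → ℤ) (ω : Ω) : ladderS ξ 0 ω = 0 := by
  simp [ladderS]

lemma ladderS_succ (ξ : ℕ → Ω → ℤ) (j : ℕ) (ω : Ω) :
    ladderS ξ (j + 1) ω = ladderS ξ j ω + ladderX ξ (j + 1) ω := by
  unfold ladderS
  rw [← Finset.sum_Icc_succ_top (by omega : 1 ≤ j + 1)]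

lemma ladderX_ge (ξ : ℕ → Ω → ℤ) (k : ℕ) (ω : Ω) : -1 ≤ ladderX ξ k ω := by
  unfold ladderX; split_ifs <;> omega

lemma ladderX_le (ξ : ℕ → Ω → ℤ) (k : ℕ) (ω : Ω) : ladderX ξ k ω ≤ 2 := by
  unfold ladderX; split_ifs <;> omega

lemma ladderX_ge_one (ξ : ℕ → Ω → ℤ) (k : ℕ) (ω : Ω) (h : ξ k ω = 1) :
    1 ≤ ladderX ξ k ω := by
  rcases eq_or_ne k 1 with rfl | hk
  · simp [ladderX, h]
  · have h' : ¬(ξ k ω = -1) := by rw [h]; decide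
    simp only [ladderX, if_neg hk, if_neg h']
    split_ifs <;> omega

lemma goodSet_anti (ξ : ℕ → Ω → ℤ) (L U : ℤ) {l l' : ℕ} (h : l ≤ l') :
    goodSet ξ L U l' ⊆ goodSet ξ L U l :=
  fun ω hω j hj => hω j (lt_of_lt_of_le hj h)

lemma measurableSet_goodSet_mdl (ξ : ℕ → Ω → ℤ) (L U : ℤ) {n l : ℕ} (h : l ≤ n + 1) :
    MeasurableSet[mdl ξ n] (goodSet ξ L U l) := by
  have : goodSet ξ L U l = ⋂ j ∈ Finset.range l,
      ({ω | ladderS ξ j ω ≤ L} ∪ {ω | U ≤ ladderS ξ j ω})ᶜ := by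
    ext ω
    simp only [goodSet, Set.mem_setOf_eq, Set.mem_iInter, Finset.mem_range, Set.mem_compl_iff,
      Set.mem_union]
  rw [this]
  refine MeasurableSet.biInter (Set.to_countable _) fun j hj => ?_
  have hjn : j ≤ n := by
    have := Finset.mem_range.1 (Finset.mem_coe.1 hj); omega
  have hS := measurable_ladderS_mdl ξ (n := n) hjn
  have h1 : MeasurableSet[mdl ξ n] {ω | ladderS ξ j ω ≤ L} :=
    hS (MeasurableSpace.measurableSet_top (s := Set.Iic L))
  have h2 : MeasurableSet[mdl ξ n] {ω | U ≤ ladderS ξ j ω} :=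
    hS (MeasurableSpace.measurableSet_top (s := Set.Ici U))
  exact (h1.union h2).compl

end LadderAux

namespace LadderAux2
open LadderAux
variable {Ω : Type*} [MeasurableSpace Ω]
variable {ξ : ℕ → Ω → ℤ} {L U : ℤ} {k : ℕ} {ω : Ω}

lemma tau_le : ladderTau ξ L U 0 k ω ≤ k := by
  unfold ladderTau
  split_ifs with h
  · obtain ⟨l, hl, he⟩ := h
    exact le_trans (Nat.sInf_le ⟨hl, he⟩) hl
  · exact le_rfl

lemma not_exit_of_lt_tau {j : ℕ} (hj : j < ladderTau ξ L U 0 k ω) :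
    ¬(ladderS ξ j ω ≤ L ∨ U ≤ ladderS ξ j ω) := by
  intro he
  unfold ladderTau at hj
  split_ifs at hj with h
  · have hsk : sInf {l | l ≤ k ∧ (0 + ladderS ξ l ω ≤ L ∨ U ≤ 0 + ladderS ξ l ω)} ≤ k :=
      le_trans (Nat.sInf_le ⟨h.choose_spec.1, h.choose_spec.2⟩) h.choose_spec.1
    have hjk : j ≤ k := by omega
    have hmem : j ∈ {l | l ≤ k ∧ (0 + ladderS ξ l ω ≤ L ∨ U ≤ 0 + ladderS ξ l ω)} :=
      ⟨hjk, by simpa using he⟩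
    exact absurd (Nat.sInf_le hmem) (by omega)
  · exact h ⟨j, le_of_lt hj, by simpa using he⟩

lemma le_tau_of {l : ℕ} (hl : l ≤ k)
    (h : ∀ j < l, ¬(ladderS ξ j ω ≤ L ∨ U ≤ ladderS ξ j ω)) :
    l ≤ ladderTau ξ L U 0 k ω := by
  unfold ladderTau
  split_ifs with hex
  · refine le_csInf ⟨_, hex.choose_spec.1, hex.choose_spec.2⟩ fun m hm => ?_
    by_contra hml
    exact h m (by omega) (by simpa using hm.2)
  · exact hl

lemma exit_tau_of_exists (h : ∃ l ≤ k, (ladderS ξ l ω ≤ L ∨ U ≤ ladderS ξ l ω)) :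
    ladderS ξ (ladderTau ξ L U 0 k ω) ω ≤ L ∨ U ≤ ladderS ξ (ladderTau ξ L U 0 k ω) ω := by
  have h' : ∃ l ≤ k, (0 + ladderS ξ l ω ≤ L ∨ U ≤ 0 + ladderS ξ l ω) := by simpa using h
  unfold ladderTau
  rw [if_pos h']
  have := Nat.sInf_mem (⟨h'.choose, h'.choose_spec⟩ :
    {l | l ≤ k ∧ (0 + ladderS ξ l ω ≤ L ∨ U ≤ 0 + ladderS ξ l ω)}.Nonempty)
  simpa using this.2

lemma mem_ladderB_iff :
    ω ∈ ladderB ξ L U 0 k ↔ U ≤ ladderS ξ (ladderTau ξ L U 0 k ω) ω := by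
  constructor
  · intro hm
    simp only [ladderB, Set.mem_iUnion, Finset.mem_range, Set.mem_setOf_eq] at hm
    obtain ⟨l, _, hτ, hU⟩ := hm
    rw [hτ]; simpa using hU
  · intro hU
    simp only [ladderB, Set.mem_iUnion, Finset.mem_range, Set.mem_setOf_eq]
    exact ⟨ladderTau ξ L U 0 k ω, by have := tau_le (ξ := ξ) (L := L) (U := U) (k := k) (ω := ω); omega,
      rfl, by simpa using hU⟩


/-- exit set at time j -/
def exitSet (ξ : ℕ → Ω → ℤ) (L U : ℤ) (j : ℕ) : Set Ω :=
  {ω | ladderS ξ j ω ≤ L ∨ U ≤ ladderS ξ j ω}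

lemma measurable_ladderS (hmeas : ∀ n, Measurable (ξ n)) (j : ℕ) :
    Measurable (ladderS ξ j) :=
  (measurable_ladderS_mdl ξ (n := j) le_rfl).mono (mdl_le ξ hmeas j) le_rfl

lemma measurableSet_goodSet (hmeas : ∀ n, Measurable (ξ n)) (l : ℕ) :
    MeasurableSet (goodSet ξ L U l) :=
  mdl_le ξ hmeas l _ (measurableSet_goodSet_mdl ξ L U (by omega : l ≤ l + 1))

lemma measurableSet_exitSet (hmeas : ∀ n, Measurable (ξ n)) (j : ℕ) :
    MeasurableSet (exitSet ξ L U j) := by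
  have h := measurable_ladderS (ξ := ξ) hmeas j
  exact (h (MeasurableSpace.measurableSet_top (s := Set.Iic L))).union
    (h (MeasurableSpace.measurableSet_top (s := Set.Ici U)))

lemma tau_eq_iff_lt {l : ℕ} (hl : l < k) :
    ladderTau ξ L U 0 k ω = l ↔ (ω ∈ goodSet ξ L U l ∧ ω ∈ exitSet ξ L U l) := by
  constructor
  · intro h
    refine ⟨fun j hj => not_exit_of_lt_tau (by omega : j < ladderTau ξ L U 0 k ω), ?_⟩
    by_cases hex : ∃ m ≤ k, (ladderS ξ m ω ≤ L ∨ U ≤ ladderS ξ m ω)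
    · have := exit_tau_of_exists hex
      rw [h] at this
      exact this
    · exfalso
      have hk : ladderTau ξ L U 0 k ω = k := by
        unfold ladderTau
        rw [if_neg]
        intro hc
        exact hex (by simpa using hc)
      omega
  · rintro ⟨hg, he⟩
    have h1 : l ≤ ladderTau ξ L U 0 k ω := le_tau_of (by omega) fun j hj => hg j hj
    have h2 : ¬(l < ladderTau ξ L U 0 k ω) := fun hlt => not_exit_of_lt_tau hlt he
    omega

lemma tau_eq_k_iff : ladderTau ξ L U 0 k ω = k ↔ ω ∈ goodSet ξ L U k := by
  constructor
  · intro h j hj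
    exact not_exit_of_lt_tau (by omega : j < ladderTau ξ L U 0 k ω)
  · intro hg
    have h1 : k ≤ ladderTau ξ L U 0 k ω := le_tau_of le_rfl fun j hj => hg j hj
    have h2 := tau_le (ξ := ξ) (L := L) (U := U) (k := k) (ω := ω)
    omega

lemma measurable_tau (hmeas : ∀ n, Measurable (ξ n)) :
    Measurable (ladderTau ξ L U 0 k) := by
  refine measurable_to_countable' fun l => ?_
  rcases lt_trichotomy l k with hl | rfl | hl
  · have : ladderTau ξ L U 0 k ⁻¹' {l} = goodSet ξ L U l ∩ exitSet ξ L U l := by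
      ext ω; simpa using tau_eq_iff_lt hl
    rw [this]
    exact (measurableSet_goodSet hmeas l).inter (measurableSet_exitSet hmeas l)
  · have : ladderTau ξ L U 0 l ⁻¹' {l} = goodSet ξ L U l := by
      ext ω; simpa using tau_eq_k_iff
    rw [this]
    exact measurableSet_goodSet hmeas l
  · have : ladderTau ξ L U 0 k ⁻¹' {l} = ∅ := by
      ext ω
      simp only [Set.mem_preimage, Set.mem_singleton_iff, Set.mem_empty_iff_false, iff_false]
      intro h
      have := tau_le (ξ := ξ) (L := L) (U := U) (k := k) (ω := ω)
      omega
    rw [this]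
    exact MeasurableSet.empty

lemma measurableSet_ladderB (hmeas : ∀ n, Measurable (ξ n)) :
    MeasurableSet (ladderB ξ L U 0 k) := by
  refine MeasurableSet.biUnion (Set.to_countable _) fun l _ => ?_
  have : {ω | ladderTau ξ L U 0 k ω = l ∧ U ≤ 0 + ladderS ξ l ω} =
      (ladderTau ξ L U 0 k ⁻¹' {l}) ∩ {ω | U ≤ 0 + ladderS ξ l ω} := by
    ext ω; simp [Set.mem_setOf_eq]
  rw [this]
  refine (measurable_tau hmeas (MeasurableSet.singleton l)).inter ?_
  have h := measurable_ladderS (ξ := ξ) hmeas l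
  have : {ω | U ≤ 0 + ladderS ξ l ω} = ladderS ξ l ⁻¹' {z | U ≤ 0 + z} := rfl
  rw [this]
  exact h (MeasurableSpace.measurableSet_top)


lemma mem_goodSet_iff_le_tau {l : ℕ} (hl : l ≤ k) :
    ω ∈ goodSet ξ L U l ↔ l ≤ ladderTau ξ L U 0 k ω := by
  constructor
  · intro hg
    exact le_tau_of hl fun j hj => hg j hj
  · intro hτ j hj
    exact not_exit_of_lt_tau (by omega : j < ladderTau ξ L U 0 k ω)

lemma S_tau_ge (hL : L < 0) : L ≤ ladderS ξ (ladderTau ξ L U 0 k ω) ω := by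
  rcases h : ladderTau ξ L U 0 k ω with _ | j
  · rw [ladderS_zero]; omega
  · have hj : ¬(ladderS ξ j ω ≤ L ∨ U ≤ ladderS ξ j ω) :=
      not_exit_of_lt_tau (k := k) (by omega)
    push_neg at hj
    have := ladderX_ge ξ (j + 1) ω
    rw [ladderS_succ]
    omega

lemma S_tau_le (hU : 0 < U) : ladderS ξ (ladderTau ξ L U 0 k ω) ω ≤ U + 1 := by
  rcases h : ladderTau ξ L U 0 k ω with _ | j
  · rw [ladderS_zero]; omega
  · have hj : ¬(ladderS ξ j ω ≤ L ∨ U ≤ ladderS ξ j ω) :=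
      not_exit_of_lt_tau (k := k) (by omega)
    push_neg at hj
    have := ladderX_le ξ (j + 1) ω
    rw [ladderS_succ]
    omega

lemma not_good_of_mem_B (hB : ω ∈ ladderB ξ L U 0 k) (hU : 0 < U) :
    ω ∉ goodSet ξ L U (k + 1) := by
  intro hg
  have hUτ := (mem_ladderB_iff).1 hB
  exact hg _ (by have := tau_le (ξ := ξ) (L := L) (U := U) (k := k) (ω := ω); omega) (Or.inr hUτ)

lemma S_tau_le_L (hB : ω ∉ ladderB ξ L U 0 k) (hC : ω ∉ goodSet ξ L U (k + 1)) :
    ladderS ξ (ladderTau ξ L U 0 k ω) ω ≤ L := by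
  have hex : ∃ m ≤ k, (ladderS ξ m ω ≤ L ∨ U ≤ ladderS ξ m ω) := by
    by_contra hne
    push_neg at hne
    exact hC fun j hj => by have := hne j (by omega); omega
  rcases exit_tau_of_exists hex with h | h
  · exact h
  · exact absurd ((mem_ladderB_iff).2 h) hB

lemma S_tau_rep :
    ladderS ξ (ladderTau ξ L U 0 k ω) ω =
      ∑ l ∈ Finset.Icc 1 k, (if ω ∈ goodSet ξ L U l then ladderX ξ l ω else 0) := by
  have hτk : ladderTau ξ L U 0 k ω ≤ k := tau_le
  have key : ∀ l ∈ Finset.Icc 1 k,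
      (if ω ∈ goodSet ξ L U l then ladderX ξ l ω else 0) =
      (if l ≤ ladderTau ξ L U 0 k ω then ladderX ξ l ω else 0) := by
    intro l hl
    have := Finset.mem_Icc.1 hl
    by_cases hg : ω ∈ goodSet ξ L U l
    · rw [if_pos hg, if_pos ((mem_goodSet_iff_le_tau this.2).1 hg)]
    · rw [if_neg hg, if_neg (fun hle => hg ((mem_goodSet_iff_le_tau this.2).2 hle))]
  rw [Finset.sum_congr rfl key]
  rw [← Finset.sum_subset (Finset.Icc_subset_Icc_right hτk)
    (fun l hl hnl => by
      rw [if_neg]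
      intro hle
      exact hnl (Finset.mem_Icc.2 ⟨(Finset.mem_Icc.1 hl).1, hle⟩))]
  rw [Finset.sum_congr rfl (fun l hl => if_pos (Finset.mem_Icc.1 hl).2)]
  rfl

lemma pr_diff (P : Measure Ω) [IsProbabilityMeasure P] {A B : Set Ω} (h : B ⊆ A)
    (hB : MeasurableSet B) :
    (P (A \ B)).toReal = (P A).toReal - (P B).toReal := by
  rw [measure_diff h hB.nullMeasurableSet (measure_ne_top P B),
    ENNReal.toReal_sub_of_le (measure_mono h) (measure_ne_top P A)]

lemma goodSet_one (hL : L < 0) (hU : 0 < U) : goodSet ξ L U 1 = (Set.univ : Set Ω) := by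
  ext ω
  simp only [goodSet, Set.mem_setOf_eq, Set.mem_univ, iff_true]
  intro j hj
  interval_cases j
  rw [ladderS_zero]
  omega

lemma integral_term_one (P : Measure Ω) [IsProbabilityMeasure P]
    (hmeas : ∀ n, Measurable (ξ n))
    (hval : ∀ n ω, ξ n ω = 1 ∨ ξ n ω = -1)
    {p : ℝ} (hp0 : 0 ≤ p) (hprob : ∀ n, 1 ≤ n → P {ω | ξ n ω = 1} = ENNReal.ofReal p)
    (hL : L < 0) (hU : 0 < U) :
    Integrable ((goodSet ξ L U 1).indicator fun ω => ((ladderX ξ 1 ω : ℤ) : ℝ)) P ∧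
    ∫ ω, (goodSet ξ L U 1).indicator (fun ω => ((ladderX ξ 1 ω : ℤ) : ℝ)) ω ∂P = 2 * p - 1 := by
  have hE : MeasurableSet {ω | ξ 1 ω = 1} := hmeas 1 (MeasurableSet.singleton 1)
  have hrep : ∀ ω, (goodSet ξ L U 1).indicator (fun ω => ((ladderX ξ 1 ω : ℤ) : ℝ)) ω =
      {ω | ξ 1 ω = 1}.indicator (fun _ => (2 : ℝ)) ω +
        Set.indicator Set.univ (fun _ => (-1 : ℝ)) ω := by
    intro ω
    rw [goodSet_one hL hU]
    by_cases h1 : ξ 1 ω = 1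
    · simp [ladderX, h1]
      all_goals norm_num
    · have h1' : ξ 1 ω = -1 := (hval 1 ω).resolve_left h1
      simp [ladderX, h1, h1']
  have hint : Integrable (fun ω => {ω | ξ 1 ω = 1}.indicator (fun _ => (2 : ℝ)) ω +
      Set.indicator Set.univ (fun _ => (-1 : ℝ)) ω) P :=
    ((integrable_const _).indicator hE).add ((integrable_const _).indicator MeasurableSet.univ)
  have h1 : Integrable ({ω | ξ 1 ω = 1}.indicator (fun _ => (2:ℝ))) P :=
    (integrable_const _).indicator hE
  have h2 : Integrable (Set.indicator Set.univ (fun _ => (-1:ℝ)) : Ω → ℝ) P :=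
    (integrable_const _).indicator MeasurableSet.univ
  constructor
  · exact (h1.add h2).congr (Filter.Eventually.of_forall fun ω => (hrep ω).symm)
  · rw [integral_congr_ae (Filter.Eventually.of_forall hrep), integral_add h1 h2,
      integral_indicator_const _ hE, integral_indicator_const _ MeasurableSet.univ]
    simp only [measureReal_def]
    rw [hprob 1 le_rfl]
    simp only [smul_eq_mul, measure_univ, ENNReal.toReal_one, ENNReal.toReal_ofReal hp0]
    ring

lemma integral_term_ge_two (P : Measure Ω) [IsProbabilityMeasure P]
    (hmeas : ∀ n, Measurable (ξ n)) (hindep : iIndepFun ξ P)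
    (hval : ∀ n ω, ξ n ω = 1 ∨ ξ n ω = -1)
    {p : ℝ} (hp0 : 0 ≤ p) (hprob : ∀ n, 1 ≤ n → P {ω | ξ n ω = 1} = ENNReal.ofReal p)
    {l : ℕ} (hl : 2 ≤ l) :
    Integrable ((goodSet ξ L U l).indicator fun ω => ((ladderX ξ l ω : ℤ) : ℝ)) P ∧
    ∫ ω, (goodSet ξ L U l).indicator (fun ω => ((ladderX ξ l ω : ℤ) : ℝ)) ω ∂P =
      (2 * p - 1) * (P (goodSet ξ L U l)).toReal
        + p * (P (goodSet ξ L U l ∩ {ω | ξ (l - 1) ω = 1})).toReal := by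
  set G := goodSet ξ L U l with hGdef
  set E1 := {ω | ξ l ω = 1} with hE1def
  set F1 := {ω | ξ (l - 1) ω = 1} with hF1def
  have hG : MeasurableSet G := measurableSet_goodSet hmeas l
  have hE : MeasurableSet E1 := hmeas l (MeasurableSet.singleton 1)
  have hF : MeasurableSet F1 := hmeas (l - 1) (MeasurableSet.singleton 1)
  have hrep : ∀ ω, G.indicator (fun ω => ((ladderX ξ l ω : ℤ) : ℝ)) ω =
      (G ∩ E1).indicator (fun _ => (3 : ℝ)) ω +
        (G.indicator (fun _ => (-1 : ℝ)) ω +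
        ((G ∩ E1) \ (G ∩ E1 ∩ F1)).indicator (fun _ => (-1 : ℝ)) ω) := by
    intro ω
    have hlne : l ≠ 1 := by omega
    by_cases hGm : ω ∈ G
    · by_cases h1 : ξ l ω = 1
      · have h1' : ¬(ξ l ω = -1) := by rw [h1]; decide
        by_cases h2 : ξ (l - 1) ω = 1
        · have m1 : ω ∈ G ∩ E1 := ⟨hGm, h1⟩
          have m2 : ω ∉ (G ∩ E1) \ (G ∩ E1 ∩ F1) := fun hm => hm.2 ⟨⟨hGm, h1⟩, h2⟩
          rw [Set.indicator_of_mem hGm, Set.indicator_of_mem m1, Set.indicator_of_mem hGm,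
            Set.indicator_of_notMem m2]
          simp [ladderX, hlne, h1', h2]
          all_goals norm_num
        · have m1 : ω ∈ G ∩ E1 := ⟨hGm, h1⟩
          have m2 : ω ∈ (G ∩ E1) \ (G ∩ E1 ∩ F1) := ⟨⟨hGm, h1⟩, fun hm => h2 hm.2⟩
          rw [Set.indicator_of_mem hGm, Set.indicator_of_mem m1, Set.indicator_of_mem hGm,
            Set.indicator_of_mem m2]
          simp [ladderX, hlne, h1', h2]
          all_goals norm_num
      · have h1' : ξ l ω = -1 := (hval l ω).resolve_left h1
        have m1 : ω ∉ G ∩ E1 := fun hm => h1 hm.2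
        have m2 : ω ∉ (G ∩ E1) \ (G ∩ E1 ∩ F1) := fun hm => h1 hm.1.2
        rw [Set.indicator_of_mem hGm, Set.indicator_of_notMem m1, Set.indicator_of_mem hGm,
          Set.indicator_of_notMem m2]
        simp [ladderX, hlne, h1']
    · have m1 : ω ∉ G ∩ E1 := fun hm => hGm hm.1
      have m2 : ω ∉ (G ∩ E1) \ (G ∩ E1 ∩ F1) := fun hm => hGm hm.1.1
      rw [Set.indicator_of_notMem hGm, Set.indicator_of_notMem m1,
        Set.indicator_of_notMem hGm, Set.indicator_of_notMem m2]
      ring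
  -- independence computations
  have hGmdl : MeasurableSet[mdl ξ (l - 1)] G :=
    measurableSet_goodSet_mdl ξ L U (by omega : l ≤ (l - 1) + 1)
  have hGFmdl : MeasurableSet[mdl ξ (l - 1)] (G ∩ F1) :=
    hGmdl.inter (measurableSet_xi_eq ξ (by omega) le_rfl 1)
  have kE : (P (G ∩ E1)).toReal = (P G).toReal * p := by
    rw [hE1def, indep_key ξ P hmeas hindep (by omega : l - 1 < l) hGmdl 1, hprob l (by omega),
      ENNReal.toReal_mul, ENNReal.toReal_ofReal hp0]
  have kF : (P (G ∩ E1 ∩ F1)).toReal = (P (G ∩ F1)).toReal * p := by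
    have hset : G ∩ E1 ∩ F1 = (G ∩ F1) ∩ E1 := by
      ext ω; simp only [Set.mem_inter_iff]; tauto
    rw [hset, hE1def, indep_key ξ P hmeas hindep (by omega : l - 1 < l) hGFmdl 1,
      hprob l (by omega), ENNReal.toReal_mul, ENNReal.toReal_ofReal hp0]
  have kD : (P ((G ∩ E1) \ (G ∩ E1 ∩ F1))).toReal
      = (P (G ∩ E1)).toReal - (P (G ∩ E1 ∩ F1)).toReal :=
    pr_diff P (fun ω hm => hm.1) ((hG.inter hE).inter hF)
  have h1 : Integrable ((G ∩ E1).indicator (fun _ => (3:ℝ))) P :=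
    (integrable_const _).indicator (hG.inter hE)
  have h2 : Integrable (G.indicator (fun _ => (-1:ℝ))) P := (integrable_const _).indicator hG
  have h3 : Integrable (((G ∩ E1) \ (G ∩ E1 ∩ F1)).indicator (fun _ => (-1:ℝ))) P :=
    (integrable_const _).indicator ((hG.inter hE).diff ((hG.inter hE).inter hF))
  constructor
  · exact (h1.add (h2.add h3)).congr (Filter.Eventually.of_forall fun ω => (hrep ω).symm)
  · calc ∫ ω, G.indicator (fun ω => ((ladderX ξ l ω : ℤ) : ℝ)) ω ∂P
        = ∫ ω, ((G ∩ E1).indicator (fun _ => (3 : ℝ)) ω +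
            (G.indicator (fun _ => (-1 : ℝ)) ω +
            ((G ∩ E1) \ (G ∩ E1 ∩ F1)).indicator (fun _ => (-1 : ℝ)) ω)) ∂P :=
          integral_congr_ae (Filter.Eventually.of_forall hrep)
      _ = (∫ ω, (G ∩ E1).indicator (fun _ => (3 : ℝ)) ω ∂P) +
          ∫ ω, (G.indicator (fun _ => (-1 : ℝ)) ω +
            ((G ∩ E1) \ (G ∩ E1 ∩ F1)).indicator (fun _ => (-1 : ℝ)) ω) ∂P :=
          integral_add h1 (h2.add h3)
      _ = (∫ ω, (G ∩ E1).indicator (fun _ => (3 : ℝ)) ω ∂P) +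
          ((∫ ω, G.indicator (fun _ => (-1 : ℝ)) ω ∂P) +
           ∫ ω, ((G ∩ E1) \ (G ∩ E1 ∩ F1)).indicator (fun _ => (-1 : ℝ)) ω ∂P) := by
          rw [integral_add h2 h3]
      _ = (2 * p - 1) * (P G).toReal + p * (P (G ∩ F1)).toReal := by
          rw [integral_indicator_const _ (hG.inter hE), integral_indicator_const _ hG,
            integral_indicator_const _ ((hG.inter hE).diff ((hG.inter hE).inter hF))]
          simp only [measureReal_def]
          rw [kD, kE, kF]
          simp only [smul_eq_mul]
          ring

lemma a_mono (P : Measure Ω) [IsProbabilityMeasure P] {l l' : ℕ} (h : l ≤ l') :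
    (P (goodSet ξ L U l')).toReal ≤ (P (goodSet ξ L U l)).toReal :=
  ENNReal.toReal_mono (measure_ne_top P _) (measure_mono (goodSet_anti ξ L U h))

lemma a_nonneg (P : Measure Ω) [IsProbabilityMeasure P] (l : ℕ) :
    0 ≤ (P (goodSet ξ L U l)).toReal := ENNReal.toReal_nonneg

lemma a_le_one (P : Measure Ω) [IsProbabilityMeasure P] (l : ℕ) :
    (P (goodSet ξ L U l)).toReal ≤ 1 := by
  rw [← ENNReal.toReal_one]
  exact ENNReal.toReal_mono (by simp) prob_le_one

lemma a_one_eq (P : Measure Ω) [IsProbabilityMeasure P] (hL : L < 0) (hU : 0 < U) :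
    (P (goodSet ξ L U 1)).toReal = 1 := by
  rw [goodSet_one hL hU (ξ := ξ)]
  simp

lemma c_bounds (P : Measure Ω) [IsProbabilityMeasure P]
    (hmeas : ∀ n, Measurable (ξ n)) (hindep : iIndepFun ξ P)
    {p : ℝ} (hp0 : 0 ≤ p) (hprob : ∀ n, 1 ≤ n → P {ω | ξ n ω = 1} = ENNReal.ofReal p)
    {l : ℕ} (hl : 2 ≤ l) :
    (P (goodSet ξ L U l ∩ {ω | ξ (l - 1) ω = 1})).toReal ≤
        p * (P (goodSet ξ L U (l - 1))).toReal ∧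
      p * (P (goodSet ξ L U (l - 1))).toReal
          - (P (goodSet ξ L U l ∩ {ω | ξ (l - 1) ω = 1})).toReal ≤
        (P (goodSet ξ L U (l - 1))).toReal - (P (goodSet ξ L U l)).toReal := by
  set G' := goodSet ξ L U (l - 1) with hG'def
  set G := goodSet ξ L U l with hGdef
  set F1 := {ω | ξ (l - 1) ω = 1} with hF1def
  have hsub : G ⊆ G' := goodSet_anti ξ L U (by omega)
  have hG : MeasurableSet G := measurableSet_goodSet hmeas l
  have hG' : MeasurableSet G' := measurableSet_goodSet hmeas (l - 1)
  have hF : MeasurableSet F1 := hmeas (l - 1) (MeasurableSet.singleton 1)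
  have hG'mdl : MeasurableSet[mdl ξ (l - 2)] G' :=
    measurableSet_goodSet_mdl ξ L U (by omega : l - 1 ≤ (l - 2) + 1)
  have key : (P (G' ∩ F1)).toReal = (P G').toReal * p := by
    rw [hF1def, indep_key ξ P hmeas hindep (by omega : l - 2 < l - 1) hG'mdl 1,
      hprob (l - 1) (by omega), ENNReal.toReal_mul, ENNReal.toReal_ofReal hp0]
  constructor
  · rw [mul_comm, ← key]
    exact ENNReal.toReal_mono (measure_ne_top P _)
      (measure_mono (Set.inter_subset_inter_left _ hsub))
  · have hd1 : (P ((G' ∩ F1) \ (G ∩ F1))).toReal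
        = (P (G' ∩ F1)).toReal - (P (G ∩ F1)).toReal :=
      pr_diff P (Set.inter_subset_inter_left _ hsub) (hG.inter hF)
    have hd2 : (P (G' \ G)).toReal = (P G').toReal - (P G).toReal := pr_diff P hsub hG
    have hmono : (P ((G' ∩ F1) \ (G ∩ F1))).toReal ≤ (P (G' \ G)).toReal := by
      refine ENNReal.toReal_mono (measure_ne_top P _) (measure_mono ?_)
      rintro ω ⟨⟨h1, h2⟩, h3⟩
      exact ⟨h1, fun hg => h3 ⟨hg, h2⟩⟩
    rw [mul_comm, ← key]
    rw [hd1, hd2] at hmono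
    linarith

lemma sum_term_bounds (P : Measure Ω) [IsProbabilityMeasure P]
    (hmeas : ∀ n, Measurable (ξ n)) (hindep : iIndepFun ξ P)
    (hval : ∀ n ω, ξ n ω = 1 ∨ ξ n ω = -1)
    {p : ℝ} (hp0 : 0 ≤ p) (hprob : ∀ n, 1 ≤ n → P {ω | ξ n ω = 1} = ENNReal.ofReal p)
    (hsq : 2 * p - 1 = -(p * p))
    (hL : L < 0) (hU : 0 < U) :
    ∀ k, 1 ≤ k →
      (∑ l ∈ Finset.Icc 1 k,
          ∫ ω, (goodSet ξ L U l).indicator (fun ω => ((ladderX ξ l ω : ℤ) : ℝ)) ω ∂P) ≤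
        -(p * p) * (P (goodSet ξ L U k)).toReal ∧
      -(p * p) * (P (goodSet ξ L U k)).toReal - p * (1 - (P (goodSet ξ L U k)).toReal) ≤
        ∑ l ∈ Finset.Icc 1 k,
          ∫ ω, (goodSet ξ L U l).indicator (fun ω => ((ladderX ξ l ω : ℤ) : ℝ)) ω ∂P := by
  intro k hk
  induction k, hk using Nat.le_induction with
  | base =>
    have h1 := (integral_term_one P hmeas hval hp0 hprob hL hU (ξ := ξ)).2
    have ha1 := a_one_eq (ξ := ξ) P hL hU
    rw [Finset.Icc_self, Finset.sum_singleton, h1, ha1]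
    constructor <;> nlinarith
  | succ k hk ih =>
    rw [Finset.sum_Icc_succ_top (by omega : 1 ≤ k + 1)]
    have ht := (integral_term_ge_two P hmeas hindep hval hp0 hprob
      (by omega : 2 ≤ k + 1) (L := L) (U := U)).2
    have hc := c_bounds P hmeas hindep hp0 hprob (by omega : 2 ≤ k + 1) (L := L) (U := U)
    have hred : k + 1 - 1 = k := by omega
    rw [hred] at ht hc
    have hak := a_mono (ξ := ξ) (L := L) (U := U) P (by omega : k ≤ k + 1)
    have ha0 := a_nonneg (ξ := ξ) (L := L) (U := U) P (k + 1)
    have ha1 := a_le_one (ξ := ξ) (L := L) (U := U) P k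
    constructor
    · rw [ht]
      nlinarith [ih.1, hc.1]
    · rw [ht]
      nlinarith [ih.2, hc.2]

lemma beta_gamma_ineq (P : Measure Ω) [IsProbabilityMeasure P]
    (hmeas : ∀ n, Measurable (ξ n)) (hindep : iIndepFun ξ P)
    (hval : ∀ n ω, ξ n ω = 1 ∨ ξ n ω = -1)
    {p : ℝ} (hp0 : 0 ≤ p) (hp1 : p ≤ 1)
    (hprob : ∀ n, 1 ≤ n → P {ω | ξ n ω = 1} = ENNReal.ofReal p)
    (hsq : 2 * p - 1 = -(p * p)) (hpp : p * p + p ≤ 1)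
    (hL : L < 0) (hU : 0 < U) {k : ℕ} (hk : 1 ≤ k) :
    ((U : ℝ) - L) * (P (ladderB ξ L U 0 k)).toReal ≤ -L ∧
    (-1 - (L : ℝ)) ≤ ((U : ℝ) + 1 - L) *
      ((P (ladderB ξ L U 0 k)).toReal + (P (goodSet ξ L U (k + 1))).toReal) := by
  classical
  set fS := fun ω => ((ladderS ξ (ladderTau ξ L U 0 k ω) ω : ℤ) : ℝ) with hfSdef
  -- pointwise sum representation
  have hpt : ∀ ω, fS ω = ∑ l ∈ Finset.Icc 1 k,
      (goodSet ξ L U l).indicator (fun ω => ((ladderX ξ l ω : ℤ) : ℝ)) ω := by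
    intro ω
    rw [hfSdef]
    simp only
    rw [S_tau_rep (ξ := ξ) (L := L) (U := U) (k := k) (ω := ω), Int.cast_sum]
    refine Finset.sum_congr rfl fun l hl => ?_
    rw [Set.indicator_apply]
    split_ifs with h <;> simp
  have hterm_int : ∀ l ∈ Finset.Icc 1 k,
      Integrable ((goodSet ξ L U l).indicator fun ω => ((ladderX ξ l ω : ℤ) : ℝ)) P := by
    intro l hl
    have hl' := Finset.mem_Icc.1 hl
    rcases eq_or_ne l 1 with rfl | hne
    · exact (integral_term_one P hmeas hval hp0 hprob hL hU (ξ := ξ)).1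
    · exact (integral_term_ge_two P hmeas hindep hval hp0 hprob
        (by omega : 2 ≤ l) (L := L) (U := U)).1
  have hsum_int : Integrable (fun ω => ∑ l ∈ Finset.Icc 1 k,
      (goodSet ξ L U l).indicator (fun ω => ((ladderX ξ l ω : ℤ) : ℝ)) ω) P :=
    integrable_finset_sum _ hterm_int
  have hfS_int : Integrable fS P :=
    hsum_int.congr (Filter.Eventually.of_forall fun ω => (hpt ω).symm)
  have hIeq : ∫ ω, fS ω ∂P = ∑ l ∈ Finset.Icc 1 k,
      ∫ ω, (goodSet ξ L U l).indicator (fun ω => ((ladderX ξ l ω : ℤ) : ℝ)) ω ∂P := by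
    rw [integral_congr_ae (Filter.Eventually.of_forall hpt)]
    exact integral_finset_sum _ hterm_int
  have hbounds := sum_term_bounds P hmeas hindep hval hp0 hprob hsq hL hU (L := L) (U := U) k hk
  have ha0 := a_nonneg (ξ := ξ) (L := L) (U := U) P k
  have ha1 := a_le_one (ξ := ξ) (L := L) (U := U) P k
  have hE_ub : ∫ ω, fS ω ∂P ≤ 0 := by rw [hIeq]; nlinarith [hbounds.1]
  have hE_lb : (-1 : ℝ) ≤ ∫ ω, fS ω ∂P := by rw [hIeq]; nlinarith [hbounds.2]
  have hBme : MeasurableSet (ladderB ξ L U 0 k) := measurableSet_ladderB hmeas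
  have hCme : MeasurableSet (goodSet ξ L U (k + 1)) := measurableSet_goodSet hmeas (k + 1)
  constructor
  · -- lower comparison function
    set g := fun ω => (L : ℝ) + (ladderB ξ L U 0 k).indicator (fun _ => ((U : ℝ) - L)) ω with hgdef
    have hg_int : Integrable g P :=
      (integrable_const _).add ((integrable_const _).indicator hBme)
    have hle : ∀ ω, g ω ≤ fS ω := by
      intro ω
      rw [hgdef]
      simp only
      by_cases hB : ω ∈ ladderB ξ L U 0 k
      · rw [Set.indicator_of_mem hB]
        have := (mem_ladderB_iff (ξ := ξ) (L := L) (U := U) (k := k)).1 hB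
        have := (Int.cast_le (R := ℝ)).2 this
        push_cast at this ⊢
        linarith
      · rw [Set.indicator_of_notMem hB]
        have := S_tau_ge (ξ := ξ) (U := U) (k := k) (ω := ω) hL
        have := (Int.cast_le (R := ℝ)).2 this
        linarith
    have hint_g : ∫ ω, g ω ∂P = L + ((U : ℝ) - L) * (P (ladderB ξ L U 0 k)).toReal := by
      rw [hgdef]
      simp only
      rw [integral_add (integrable_const _) ((integrable_const _).indicator hBme),
        integral_const, integral_indicator_const _ hBme]
      simp [smul_eq_mul, mul_comm, measureReal_def]
    have := integral_mono hg_int hfS_int hle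
    rw [hint_g] at this
    linarith
  · -- upper comparison function
    set g := fun ω => (L : ℝ) +
      ((ladderB ξ L U 0 k).indicator (fun _ => ((U : ℝ) + 1 - L)) ω +
       (goodSet ξ L U (k + 1)).indicator (fun _ => ((U : ℝ) + 1 - L)) ω) with hgdef
    have hg_int : Integrable g P :=
      (integrable_const _).add (((integrable_const _).indicator hBme).add
        ((integrable_const _).indicator hCme))
    have hle : ∀ ω, fS ω ≤ g ω := by
      intro ω
      rw [hgdef]
      simp only
      by_cases hB : ω ∈ ladderB ξ L U 0 k
      · have hC : ω ∉ goodSet ξ L U (k + 1) := not_good_of_mem_B hB hU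
        rw [Set.indicator_of_mem hB, Set.indicator_of_notMem hC]
        have := S_tau_le (ξ := ξ) (L := L) (k := k) (ω := ω) hU
        have := (Int.cast_le (R := ℝ)).2 this
        push_cast at this ⊢
        linarith
      · by_cases hC : ω ∈ goodSet ξ L U (k + 1)
        · rw [Set.indicator_of_notMem hB, Set.indicator_of_mem hC]
          have := S_tau_le (ξ := ξ) (L := L) (k := k) (ω := ω) hU
          have := (Int.cast_le (R := ℝ)).2 this
          push_cast at this ⊢
          linarith
        · rw [Set.indicator_of_notMem hB, Set.indicator_of_notMem hC]
          have := S_tau_le_L (ξ := ξ) (k := k) (ω := ω) hB hC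
          have := (Int.cast_le (R := ℝ)).2 this
          linarith
    have hint_g : ∫ ω, g ω ∂P = L + ((U : ℝ) + 1 - L) *
        ((P (ladderB ξ L U 0 k)).toReal + (P (goodSet ξ L U (k + 1))).toReal) := by
      rw [hgdef]
      simp only
      calc ∫ ω, ((L : ℝ) + ((ladderB ξ L U 0 k).indicator (fun _ => ((U : ℝ) + 1 - L)) ω +
            (goodSet ξ L U (k + 1)).indicator (fun _ => ((U : ℝ) + 1 - L)) ω)) ∂P
          = (∫ _ω, (L : ℝ) ∂P) + ∫ ω, ((ladderB ξ L U 0 k).indicator (fun _ => ((U : ℝ) + 1 - L)) ω +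
            (goodSet ξ L U (k + 1)).indicator (fun _ => ((U : ℝ) + 1 - L)) ω) ∂P :=
            integral_add (integrable_const _) (((integrable_const _).indicator hBme).add
              ((integrable_const _).indicator hCme))
        _ = (∫ _ω, (L : ℝ) ∂P) +
            ((∫ ω, (ladderB ξ L U 0 k).indicator (fun _ => ((U : ℝ) + 1 - L)) ω ∂P) +
             ∫ ω, (goodSet ξ L U (k + 1)).indicator (fun _ => ((U : ℝ) + 1 - L)) ω ∂P) := by
            rw [integral_add ((integrable_const _).indicator hBme)
              ((integrable_const _).indicator hCme)]
        _ = L + ((U : ℝ) + 1 - L) *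
            ((P (ladderB ξ L U 0 k)).toReal + (P (goodSet ξ L U (k + 1))).toReal) := by
            rw [integral_const, integral_indicator_const _ hBme, integral_indicator_const _ hCme]
            simp [smul_eq_mul, measureReal_def]
            ring
    have := integral_mono hfS_int hg_int hle
    rw [hint_g] at this
    linarith

lemma biInter_Icc_succ {a b : ℕ} (h : a ≤ b + 1) (f : ℕ → Set Ω) :
    ⋂ i ∈ Finset.Icc a (b + 1), f i = (⋂ i ∈ Finset.Icc a b, f i) ∩ f (b + 1) := by
  ext ω
  simp only [Set.mem_iInter, Finset.mem_Icc, Set.mem_inter_iff]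
  constructor
  · intro hi
    exact ⟨fun i h' => hi i ⟨h'.1, by omega⟩, hi (b + 1) ⟨h, le_rfl⟩⟩
  · rintro ⟨h1, h2⟩ i ⟨hi1, hi2⟩
    rcases eq_or_ne i (b + 1) with rfl | hne
    · exact h2
    · exact h1 i ⟨hi1, by omega⟩

lemma block_prod (P : Measure Ω) [IsProbabilityMeasure P]
    (hmeas : ∀ n, Measurable (ξ n)) (hindep : iIndepFun ξ P)
    {p : ℝ} (hprob : ∀ n, 1 ≤ n → P {ω | ξ n ω = 1} = ENNReal.ofReal p)
    (s : ℕ) : ∀ r : ℕ,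
    P (goodSet ξ L U (s + 1) ∩ ⋂ i ∈ Finset.Icc (s + 1) (s + r), {ω | ξ i ω = 1}) =
      P (goodSet ξ L U (s + 1)) * (ENNReal.ofReal p) ^ r := by
  intro r
  induction r with
  | zero =>
    have : Finset.Icc (s + 1) (s + 0) = ∅ := by
      rw [Finset.Icc_eq_empty_iff]; omega
    rw [this]
    simp
  | succ r ih =>
    have hstep : s + (r + 1) = (s + r) + 1 := by omega
    rw [hstep, biInter_Icc_succ (by omega) _, ← Set.inter_assoc]
    have hAmdl : MeasurableSet[mdl ξ (s + r)]
        (goodSet ξ L U (s + 1) ∩ ⋂ i ∈ Finset.Icc (s + 1) (s + r), {ω | ξ i ω = 1}) := by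
      refine (measurableSet_goodSet_mdl ξ L U (by omega : s + 1 ≤ (s + r) + 1)).inter ?_
      refine MeasurableSet.biInter (Set.to_countable _) fun i hi => ?_
      have hi' := Finset.mem_Icc.1 (Finset.mem_coe.1 hi)
      exact measurableSet_xi_eq ξ (by omega) (by omega) 1
    rw [indep_key ξ P hmeas hindep (by omega : s + r < s + r + 1) hAmdl 1, ih,
      hprob (s + r + 1) (by omega), pow_succ, mul_assoc]

lemma block_empty (hL : L < 0) (hU : 0 < U) {m : ℕ} (hmz : (m : ℤ) = U - L) (j : ℕ) :
    goodSet ξ L U ((j + 1) * m + 1) ∩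
      (goodSet ξ L U (j * m + 1) ∩ ⋂ i ∈ Finset.Icc (j * m + 1) (j * m + m), {ω | ξ i ω = 1})
        = (∅ : Set Ω) := by
  have hm0 : 0 < m := by omega
  ext ω
  simp only [Set.mem_inter_iff, Set.mem_iInter, Set.mem_empty_iff_false, iff_false, not_and]
  intro hg2 _hg1 hblk
  -- S increases by at least r over the block
  have hup : ∀ r, r ≤ m → ladderS ξ (j * m) ω + (r : ℤ) ≤ ladderS ξ (j * m + r) ω := by
    intro r hr
    induction r with
    | zero => simp
    | succ r ih =>
      have h1 : ladderS ξ (j * m) ω + (r : ℤ) ≤ ladderS ξ (j * m + r) ω := ih (by omega)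
      have hξ : ξ (j * m + r + 1) ω = 1 := by
        have := hblk (j * m + r + 1) (Finset.mem_Icc.2 ⟨by omega, by omega⟩)
        exact this
      have h2 := ladderX_ge_one ξ (j * m + r + 1) ω hξ
      have h3 : ladderS ξ (j * m + (r + 1)) ω =
          ladderS ξ (j * m + r) ω + ladderX ξ (j * m + r + 1) ω := by
        rw [show j * m + (r + 1) = (j * m + r) + 1 by omega, ladderS_succ]
      rw [h3]
      push_cast
      omega
  have hgood0 : ¬(ladderS ξ (j * m) ω ≤ L ∨ U ≤ ladderS ξ (j * m) ω) :=
    hg2 (j * m) (by nlinarith)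
  have hgoodm : ¬(ladderS ξ (j * m + m) ω ≤ L ∨ U ≤ ladderS ξ (j * m + m) ω) :=
    hg2 (j * m + m) (by nlinarith)
  push_neg at hgood0 hgoodm
  have := hup m le_rfl
  omega

lemma gamma_tendsto (P : Measure Ω) [IsProbabilityMeasure P]
    (hmeas : ∀ n, Measurable (ξ n)) (hindep : iIndepFun ξ P)
    {p : ℝ} (hp0 : 0 < p) (hp1 : p ≤ 1)
    (hprob : ∀ n, 1 ≤ n → P {ω | ξ n ω = 1} = ENNReal.ofReal p)
    (hL : L < 0) (hU : 0 < U) :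
    Tendsto (fun k => (P (goodSet ξ L U (k + 1))).toReal) atTop (nhds 0) := by
  set m := (U - L).toNat with hmdef
  have hmz : (m : ℤ) = U - L := Int.toNat_of_nonneg (by omega)
  have hm0 : 0 < m := by omega
  -- recursion
  have hrec : ∀ j : ℕ, (P (goodSet ξ L U ((j + 1) * m + 1))).toReal ≤
      (1 - p ^ m) * (P (goodSet ξ L U (j * m + 1))).toReal := by
    intro j
    set A := goodSet ξ L U ((j + 1) * m + 1) with hAdef
    set B := goodSet ξ L U (j * m + 1) ∩
      ⋂ i ∈ Finset.Icc (j * m + 1) (j * m + m), {ω | ξ i ω = 1} with hBdef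
    have hBmeas : MeasurableSet B := by
      refine (measurableSet_goodSet hmeas _).inter ?_
      refine MeasurableSet.biInter (Set.to_countable _) fun i hi => ?_
      exact hmeas i (MeasurableSet.singleton 1)
    have hdisj : Disjoint A B := by
      rw [Set.disjoint_iff_inter_eq_empty]
      exact block_empty hL hU hmz j
    have hsub : A ∪ B ⊆ goodSet ξ L U (j * m + 1) := by
      rintro ω (hω | hω)
      · exact goodSet_anti ξ L U (by nlinarith) hω
      · exact hω.1
    have hPB : (P B).toReal = (P (goodSet ξ L U (j * m + 1))).toReal * p ^ m := by
      rw [hBdef, block_prod P hmeas hindep hprob (j * m) m, ENNReal.toReal_mul,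
        ENNReal.toReal_pow, ENNReal.toReal_ofReal hp0.le]
    have hle : P A + P B ≤ P (goodSet ξ L U (j * m + 1)) := by
      rw [← measure_union hdisj hBmeas]
      exact measure_mono hsub
    have hle' : (P A).toReal + (P B).toReal ≤ (P (goodSet ξ L U (j * m + 1))).toReal := by
      rw [← ENNReal.toReal_add (measure_ne_top P A) (measure_ne_top P B)]
      exact ENNReal.toReal_mono (measure_ne_top P _) hle
    rw [hPB] at hle'
    linarith
  -- geometric bound
  have hgeo : ∀ j : ℕ, (P (goodSet ξ L U (j * m + 1))).toReal ≤ (1 - p ^ m) ^ j := by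
    intro j
    induction j with
    | zero => simpa using a_le_one (ξ := ξ) (L := L) (U := U) P 1
    | succ j ih =>
      have h1 := hrec j
      have h2 : 0 ≤ 1 - p ^ m := by
        have := pow_le_one₀ hp0.le hp1 (n := m)
        linarith
      calc (P (goodSet ξ L U ((j + 1) * m + 1))).toReal
          ≤ (1 - p ^ m) * (P (goodSet ξ L U (j * m + 1))).toReal := h1
        _ ≤ (1 - p ^ m) * (1 - p ^ m) ^ j := by
            exact mul_le_mul_of_nonneg_left ih h2
        _ = (1 - p ^ m) ^ (j + 1) := by ring
  -- squeeze
  have hbound : ∀ k : ℕ, (P (goodSet ξ L U (k + 1))).toReal ≤ (1 - p ^ m) ^ (k / m) := by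
    intro k
    refine le_trans ?_ (hgeo (k / m))
    refine a_mono (ξ := ξ) (L := L) (U := U) P ?_
    have := Nat.div_mul_le_self k m
    omega
  have hr0 : 0 ≤ 1 - p ^ m := by
    have := pow_le_one₀ hp0.le hp1 (n := m)
    linarith
  have hr1 : 1 - p ^ m < 1 := by
    have := pow_pos hp0 m
    linarith
  have hdiv : Tendsto (fun k : ℕ => k / m) atTop atTop := by
    refine tendsto_atTop_atTop.2 fun b => ⟨b * m, fun n hn => ?_⟩
    exact (Nat.le_div_iff_mul_le hm0).2 hn
  have hg : Tendsto (fun k : ℕ => (1 - p ^ m) ^ (k / m)) atTop (nhds 0) :=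
    (tendsto_pow_atTop_nhds_zero_of_lt_one hr0 hr1).comp hdiv
  exact squeeze_zero (fun k => ENNReal.toReal_nonneg) hbound hg

end LadderAux2

/-- Let `p = √2 - 1`, and for barriers `L ≤ 0 ≤ U` with
`U - L ≥ 4` let `b L U` denote the upper-exit probability `β(0)` from `0`
(the limit of `β_k(0)`).  Then for a fixed upper barrier `U = x > 0`,
`β(0) → 1` as `L → -∞`, and for a fixed lower barrier `L = -x`,
`β(0) → 0` as `U → +∞`. -/
theorem ladder_beta_barrier_limits (p : ℝ) (hp : p = Real.sqrt 2 - 1)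
    (P : Measure Ω) [IsProbabilityMeasure P]
    (ξ : ℕ → Ω → ℤ) (hmeas : ∀ n, Measurable (ξ n))
    (hindep : iIndepFun ξ P)
    (hval : ∀ n ω, ξ n ω = 1 ∨ ξ n ω = -1)
    (hprob : ∀ n, 1 ≤ n → P {ω | ξ n ω = 1} = ENNReal.ofReal p)
    (b : ℤ → ℤ → ℝ)
    (hb : ∀ L U : ℤ, L ≤ 0 → 0 ≤ U → U - L ≥ 4 →
      Tendsto (fun k => (P (ladderB ξ L U 0 k)).toReal) atTop (nhds (b L U)))
    (x : ℤ) (hx : 0 < x) :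
    Tendsto (fun L => b L x) atBot (nhds 1) ∧
    Tendsto (fun U => b (-x) U) atTop (nhds 0) := by
  classical
  have hs2 : Real.sqrt 2 ^ 2 = 2 := Real.sq_sqrt (by norm_num)
  have hs0 : (0 : ℝ) ≤ Real.sqrt 2 := Real.sqrt_nonneg 2
  have h1lt : (1 : ℝ) < Real.sqrt 2 := by nlinarith
  have hp0 : 0 < p := by rw [hp]; linarith
  have hp1 : p ≤ 1 := by rw [hp]; nlinarith
  have hsq : 2 * p - 1 = -(p * p) := by rw [hp]; nlinarith
  have hpp : p * p + p ≤ 1 := by nlinarith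
  -- main bounds on the limit b L U
  have main : ∀ L U : ℤ, L < 0 → 0 < U → U - L ≥ 4 →
      (0 ≤ b L U ∧ ((U : ℝ) - L) * b L U ≤ -L) ∧
      (-1 - (L : ℝ)) ≤ ((U : ℝ) + 1 - L) * b L U := by
    intro L U hL hU h4
    have hbT := hb L U (by omega) (by omega) h4
    have hb0 : 0 ≤ b L U :=
      ge_of_tendsto hbT (Eventually.of_forall fun k => ENNReal.toReal_nonneg)
    have hineq := fun (k : ℕ) (hk : 1 ≤ k) =>
      LadderAux2.beta_gamma_ineq (L := L) (U := U) P hmeas hindep hval hp0.le hp1 hprob hsq hpp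
        hL hU hk
    have hmul1 : Tendsto (fun k => ((U : ℝ) - L) * (P (ladderB ξ L U 0 k)).toReal)
        atTop (nhds (((U : ℝ) - L) * b L U)) := hbT.const_mul _
    have hfirst : ((U : ℝ) - L) * b L U ≤ -L := by
      refine le_of_tendsto hmul1 ?_
      filter_upwards [eventually_ge_atTop 1] with k hk
      exact (hineq k hk).1
    have hγ := LadderAux2.gamma_tendsto (L := L) (U := U) P hmeas hindep hp0 hp1 hprob hL hU
    have hmul2 : Tendsto (fun k => ((U : ℝ) + 1 - L) *
        ((P (ladderB ξ L U 0 k)).toReal + (P (LadderAux.goodSet ξ L U (k + 1))).toReal))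
        atTop (nhds (((U : ℝ) + 1 - L) * (b L U + 0))) := (hbT.add hγ).const_mul _
    have hsecond : (-1 - (L : ℝ)) ≤ ((U : ℝ) + 1 - L) * b L U := by
      have h := ge_of_tendsto (b := (-1 - (L : ℝ))) hmul2 (by
        filter_upwards [eventually_ge_atTop 1] with k hk
        exact (hineq k hk).2)
      simpa using h
    exact ⟨⟨hb0, hfirst⟩, hsecond⟩
  constructor
  · -- L → -∞, U = x
    have hx1 : (1 : ℤ) ≤ x := hx
    -- lower bound function tends to 1
    have hden : Tendsto (fun L : ℤ => ((x : ℝ) + 1 - L)) atBot atTop := by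
      have h1 : Tendsto (fun L : ℤ => (L : ℝ)) atBot atBot :=
        tendsto_intCast_atBot_iff.2 tendsto_id
      have h2 : Tendsto (fun L : ℤ => -(L : ℝ)) atBot atTop := tendsto_neg_atBot_atTop.comp h1
      exact (tendsto_atTop_add_const_left atBot ((x : ℝ) + 1) h2).congr fun L => by ring
    have hfrac : Tendsto (fun L : ℤ => ((x : ℝ) + 2) / ((x : ℝ) + 1 - L)) atBot (nhds 0) :=
      tendsto_const_nhds.div_atTop hden
    have hlow : Tendsto (fun L : ℤ => 1 - ((x : ℝ) + 2) / ((x : ℝ) + 1 - L)) atBot (nhds 1) := by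
      simpa using (tendsto_const_nhds (x := (1 : ℝ)) (f := atBot)).sub hfrac
    refine tendsto_of_tendsto_of_tendsto_of_le_of_le' hlow tendsto_const_nhds ?_ ?_
    · -- eventual lower bound
      filter_upwards [eventually_le_atBot (-4 : ℤ)] with L hL4
      have hL : L < 0 := by omega
      have h4 : x - L ≥ 4 := by omega
      have hm := main L x hL hx h4
      have hpos : (0 : ℝ) < (x : ℝ) + 1 - L := by
        have : (L : ℝ) ≤ -4 := by exact_mod_cast hL4
        have : (0 : ℝ) < (x : ℝ) := by exact_mod_cast hx
        linarith
      have := hm.2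
      have heq : 1 - ((x : ℝ) + 2) / ((x : ℝ) + 1 - L) = (-1 - (L : ℝ)) / ((x : ℝ) + 1 - L) := by
        field_simp
        ring
      rw [heq, div_le_iff₀ hpos]
      linarith [this]
    · -- eventual upper bound b ≤ 1
      filter_upwards [eventually_le_atBot (-4 : ℤ)] with L hL4
      have hL : L < 0 := by omega
      have h4 : x - L ≥ 4 := by omega
      have hm := main L x hL hx h4
      have hpos : (0 : ℝ) < (x : ℝ) - L := by
        have : (L : ℝ) ≤ -4 := by exact_mod_cast hL4
        have : (0 : ℝ) < (x : ℝ) := by exact_mod_cast hx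
        linarith
      have h1 := hm.1.2
      have hxr : (0 : ℝ) < (x : ℝ) := by exact_mod_cast hx
      nlinarith [hm.1.1]
  · -- U → ∞, L = -x
    have hden : Tendsto (fun U : ℤ => ((U : ℝ) + x)) atTop atTop := by
      have h1 : Tendsto (fun U : ℤ => (U : ℝ)) atTop atTop :=
        tendsto_intCast_atTop_iff.2 tendsto_id
      exact tendsto_atTop_add_const_right atTop _ h1
    have hbnd : Tendsto (fun U : ℤ => (x : ℝ) / ((U : ℝ) + x)) atTop (nhds 0) :=
      tendsto_const_nhds.div_atTop hden
    refine squeeze_zero' ?_ ?_ hbnd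
    · filter_upwards [eventually_ge_atTop (4 : ℤ)] with U hU4
      exact (main (-x) U (by omega) (by omega) (by omega)).1.1
    · filter_upwards [eventually_ge_atTop (4 : ℤ)] with U hU4
      have hm := main (-x) U (by omega) (by omega) (by omega)
      have hpos : (0 : ℝ) < (U : ℝ) + x := by
        have h1 : (4 : ℝ) ≤ (U : ℝ) := by exact_mod_cast hU4
        have h2 : (0 : ℝ) < (x : ℝ) := by exact_mod_cast hx
        linarith
      rw [le_div_iff₀ hpos]
      have := hm.1.2
      push_cast at this ⊢
      nlinarith [this]



end
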